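/- Let R and B be finite sets of non-vertical planes in general position in ℝ³ such that planes in R have positive slope in the x-direction and planes in B have negative slope in the x-direction (i.e., each plane has equation z = ax + by + c with a > 0 for R and a < 0 for B, and |R|, |B| are odd). Then the intersection L of the median level of the arrangement of R and the median level of the arrangement of B is a connected, y-monotone polygonal curve: for every d ∈ ℝ, the plane y = d meets L in exactly one point. -/

import Mathlib

noncomputable section

/-- The height at `(x, y)` of the non-vertical plane `z = ax + by + c`, given by its
coefficient triple `q = (a, b, c)`. -/
def planeVal (q : ℝ × ℝ × ℝ) (x y : ℝ) : ℝ := q.1 * x + q.2.1 * y + q.2.2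

/-- Number of planes of `S` strictly below the point `p = (x, y, z)`. -/
def belowCnt (S : Finset (ℝ × ℝ × ℝ)) (p : ℝ × ℝ × ℝ) : ℕ :=
  (S.filter fun q => planeVal q p.1 p.2.1 < p.2.2).card

/-- Number of planes of `S` strictly above the point `p = (x, y, z)`. -/
def aboveCnt (S : Finset (ℝ × ℝ × ℝ)) (p : ℝ × ℝ × ℝ) : ℕ :=
  (S.filter fun q => p.2.2 < planeVal q p.1 p.2.1).card

/-- The median level of the arrangement of a set `S` of `2m + 1` planes: the points with at
most `m` planes strictly below and at most `m` planes strictly above. -/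
def medLevel (S : Finset (ℝ × ℝ × ℝ)) (m : ℕ) : Set (ℝ × ℝ × ℝ) :=
  {p | belowCnt S p ≤ m ∧ aboveCnt S p ≤ m}

namespace S16

open Filter Set

variable {S : Finset (ℝ × ℝ × ℝ)} {m : ℕ} {d x z : ℝ}

lemma below_def (S : Finset (ℝ × ℝ × ℝ)) (d x z : ℝ) :
    belowCnt S (x, d, z) = (S.filter fun q => planeVal q x d < z).card := rfl

lemma above_def (S : Finset (ℝ × ℝ × ℝ)) (d x z : ℝ) :
    aboveCnt S (x, d, z) = (S.filter fun q => z < planeVal q x d).card := rfl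

/-- the set of heights with at most `m` planes strictly below -/
def A (S : Finset (ℝ × ℝ × ℝ)) (m : ℕ) (d x : ℝ) : Set ℝ :=
  {z | belowCnt S (x, d, z) ≤ m}

def med (S : Finset (ℝ × ℝ × ℝ)) (m : ℕ) (d x : ℝ) : ℝ := sSup (A S m d x)

lemma hne (hS : S.card = 2 * m + 1) : S.Nonempty :=
  Finset.card_pos.1 (by omega)

lemma count_ge (hS : S.card = 2 * m + 1) (h : belowCnt S (x, d, z) ≤ m) :
    m + 1 ≤ (S.filter fun q => z ≤ planeVal q x d).card := by
  have h2 := Finset.card_filter_add_card_filter_not (s := S)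
    (p := fun q => planeVal q x d < z)
  rw [below_def] at h
  have h3 : (S.filter fun q => ¬ planeVal q x d < z)
      = S.filter fun q => z ≤ planeVal q x d := by simp [not_lt]
  rw [h3] at h2
  omega

lemma count_le (hS : S.card = 2 * m + 1) (h : aboveCnt S (x, d, z) ≤ m) :
    m + 1 ≤ (S.filter fun q => planeVal q x d ≤ z).card := by
  have h2 := Finset.card_filter_add_card_filter_not (s := S)
    (p := fun q => z < planeVal q x d)
  rw [above_def] at h
  have h3 : (S.filter fun q => ¬ z < planeVal q x d)
      = S.filter fun q => planeVal q x d ≤ z := by simp [not_lt]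
  rw [h3] at h2
  omega

lemma A_lower {z' : ℝ} (hzz : z' ≤ z) (hz : z ∈ A S m d x) : z' ∈ A S m d x := by
  refine le_trans (Finset.card_le_card ?_) hz
  intro q hq
  simp only [Finset.mem_filter] at hq ⊢
  exact ⟨hq.1, lt_of_lt_of_le hq.2 hzz⟩

lemma inf_mem_A (hS : S.card = 2 * m + 1) :
    S.inf' (hne hS) (fun q => planeVal q x d) ∈ A S m d x := by
  have : (S.filter fun q => planeVal q x d < S.inf' (hne hS) fun q => planeVal q x d) = ∅ := by
    rw [Finset.filter_eq_empty_iff]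
    intro q hq
    exact not_lt.2 (Finset.inf'_le _ hq)
  simp only [A, Set.mem_setOf_eq, below_def, this, Finset.card_empty]
  omega

lemma A_nonempty (hS : S.card = 2 * m + 1) : (A S m d x).Nonempty :=
  ⟨_, inf_mem_A hS⟩

lemma A_bddAbove (hS : S.card = 2 * m + 1) : BddAbove (A S m d x) := by
  refine ⟨S.sup' (hne hS) (fun q => planeVal q x d), fun z hz => ?_⟩
  by_contra hc
  push_neg at hc
  have : (S.filter fun q => planeVal q x d < z) = S := by
    rw [Finset.filter_eq_self]
    intro q hq
    exact lt_of_le_of_lt (Finset.le_sup' (fun q => planeVal q x d) hq) hc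
  have hz' : belowCnt S (x, d, z) ≤ m := hz
  rw [below_def, this, hS] at hz'
  omega

lemma mem_A_of_lt_med (hS : S.card = 2 * m + 1) (h : z < med S m d x) : z ∈ A S m d x := by
  obtain ⟨a, ha, hza⟩ := exists_lt_of_lt_csSup (A_nonempty hS) h
  exact A_lower hza.le ha

lemma med_below (hS : S.card = 2 * m + 1) : belowCnt S (x, d, med S m d x) ≤ m := by
  by_contra h
  push_neg at h
  set T := S.filter fun q => planeVal q x d < med S m d x with hT
  have hTne : T.Nonempty := Finset.card_pos.1 (by rw [← below_def (d := d)] ; omega)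
  set w := T.sup' hTne (fun q => planeVal q x d) with hw
  have hwlt : w < med S m d x := by
    rw [hw, Finset.sup'_lt_iff]
    intro q hq
    exact (Finset.mem_filter.1 hq).2
  have hmid : (w + med S m d x) / 2 ∈ A S m d x :=
    mem_A_of_lt_med hS (by linarith)
  have hsub : T ⊆ S.filter fun q => planeVal q x d < (w + med S m d x) / 2 := by
    intro q hq
    have h1 : planeVal q x d ≤ w := Finset.le_sup' (fun q => planeVal q x d) hq
    simp only [Finset.mem_filter]
    exact ⟨(Finset.mem_filter.1 hq).1, by linarith⟩
  have := Finset.card_le_card hsub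
  have hmid' : (S.filter fun q => planeVal q x d < (w + med S m d x) / 2).card ≤ m := hmid
  have hTcard : m + 1 ≤ T.card := by rw [hT, ← below_def (d := d)]; omega
  omega

lemma med_above (hS : S.card = 2 * m + 1) : aboveCnt S (x, d, med S m d x) ≤ m := by
  by_contra h
  push_neg at h
  set U := S.filter fun q => med S m d x < planeVal q x d with hU
  have hUc : m + 1 ≤ U.card := by rw [hU, ← above_def (d := d)]; omega
  have hUne : U.Nonempty := Finset.card_pos.1 (by omega)
  set v := U.inf' hUne (fun q => planeVal q x d) with hv
  have hvgt : med S m d x < v := by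
    rw [hv, Finset.lt_inf'_iff]
    intro q hq
    exact (Finset.mem_filter.1 hq).2
  have hvA : v ∈ A S m d x := by
    have hsub : (S.filter fun q => planeVal q x d < v) ⊆
        S.filter fun q => ¬ med S m d x < planeVal q x d := by
      intro q hq
      obtain ⟨hq1, hq2⟩ := Finset.mem_filter.1 hq
      simp only [Finset.mem_filter, not_lt]
      refine ⟨hq1, ?_⟩
      by_contra hc
      push_neg at hc
      have : q ∈ U := Finset.mem_filter.2 ⟨hq1, hc⟩
      exact absurd (Finset.inf'_le _ this) (not_le.2 hq2)
    have h2 := Finset.card_filter_add_card_filter_not (s := S)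
      (p := fun q => med S m d x < planeVal q x d)
    have h3 := Finset.card_le_card hsub
    rw [hS, ← hU] at h2
    simp only [A, Set.mem_setOf_eq, below_def]
    omega
  exact absurd (le_csSup (A_bddAbove hS) hvA) (not_le.2 hvgt)

lemma le_med_of_below (hS : S.card = 2 * m + 1) (h : belowCnt S (x, d, z) ≤ m) :
    z ≤ med S m d x := le_csSup (A_bddAbove hS) h

lemma lt_med_above (hS : S.card = 2 * m + 1) (h : z < med S m d x) :
    m < aboveCnt S (x, d, z) := by
  have h1 := count_ge hS (med_below hS (x := x) (d := d))
  have hsub : (S.filter fun q => med S m d x ≤ planeVal q x d) ⊆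
      S.filter fun q => z < planeVal q x d := by
    intro q hq
    obtain ⟨hq1, hq2⟩ := Finset.mem_filter.1 hq
    exact Finset.mem_filter.2 ⟨hq1, lt_of_lt_of_le h hq2⟩
  have := Finset.card_le_card hsub
  rw [above_def]
  omega

lemma med_lt_below (hS : S.card = 2 * m + 1) (h : med S m d x < z) :
    m < belowCnt S (x, d, z) := by
  have h1 := count_le hS (med_above hS (x := x) (d := d))
  have hsub : (S.filter fun q => planeVal q x d ≤ med S m d x) ⊆
      S.filter fun q => planeVal q x d < z := by
    intro q hq
    obtain ⟨hq1, hq2⟩ := Finset.mem_filter.1 hq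
    exact Finset.mem_filter.2 ⟨hq1, lt_of_le_of_lt hq2 h⟩
  have := Finset.card_le_card hsub
  rw [below_def]
  omega

lemma med_le_of_above (hS : S.card = 2 * m + 1) (h : aboveCnt S (x, d, z) ≤ m) :
    med S m d x ≤ z := by
  by_contra hc
  push_neg at hc
  exact absurd h (not_le.2 (lt_med_above hS hc))

lemma eq_med (hS : S.card = 2 * m + 1) (h1 : belowCnt S (x, d, z) ≤ m)
    (h2 : aboveCnt S (x, d, z) ≤ m) : z = med S m d x :=
  le_antisymm (le_med_of_below hS h1) (med_le_of_above hS h2)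

lemma planeVal_shift (q : ℝ × ℝ × ℝ) (x x' : ℝ) :
    planeVal q x' d = planeVal q x d + q.1 * (x' - x) := by
  simp only [planeVal]; ring

lemma med_le_add {K : ℝ} (hS : S.card = 2 * m + 1) (hK : ∀ q ∈ S, |q.1| ≤ K)
    (x x' : ℝ) : med S m d x' ≤ med S m d x + K * |x' - x| := by
  refine med_le_of_above hS ?_
  have hsub : (S.filter fun q => med S m d x + K * |x' - x| < planeVal q x' d) ⊆
      S.filter fun q => med S m d x < planeVal q x d := by
    intro q hq
    obtain ⟨hq1, hq2⟩ := Finset.mem_filter.1 hq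
    refine Finset.mem_filter.2 ⟨hq1, ?_⟩
    have h1 : q.1 * (x' - x) ≤ K * |x' - x| := by
      calc q.1 * (x' - x) ≤ |q.1 * (x' - x)| := le_abs_self _
        _ = |q.1| * |x' - x| := abs_mul _ _
        _ ≤ K * |x' - x| := by
            exact mul_le_mul_of_nonneg_right (hK q hq1) (abs_nonneg _)
    rw [planeVal_shift (d := d) q x x'] at hq2
    linarith
  have h2 := Finset.card_le_card hsub
  have h3 := med_above hS (x := x) (d := d)
  rw [above_def] at h3 ⊢
  omega

lemma med_continuous (hS : S.card = 2 * m + 1) : Continuous (med S m d) := by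
  set K := S.sup' (hne hS) (fun q => |q.1|) with hKdef
  have hK : ∀ q ∈ S, |q.1| ≤ K := fun q hq => Finset.le_sup' (fun q => |q.1|) hq
  have hK0 : 0 ≤ K := by
    obtain ⟨q, hq⟩ := hne hS
    exact le_trans (abs_nonneg q.1) (hK q hq)
  refine LipschitzWith.continuous (K := Real.toNNReal K)
    (LipschitzWith.of_dist_le_mul fun x y => ?_)
  rw [Real.dist_eq, Real.dist_eq, Real.coe_toNNReal K hK0]
  have h1 := med_le_add (d := d) hS hK y x
  have h2 := med_le_add (d := d) hS hK x y
  rw [abs_sub_comm y x] at h2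
  rw [abs_le]
  constructor <;> linarith

lemma med_strictMono (hS : S.card = 2 * m + 1) (hpos : ∀ q ∈ S, 0 < q.1) :
    StrictMono (med S m d) := by
  intro x x' hxx
  by_contra hc
  push_neg at hc
  have h1 := count_ge hS (med_below hS (x := x) (d := d))
  have hsub : (S.filter fun q => med S m d x ≤ planeVal q x d) ⊆
      S.filter fun q => med S m d x < planeVal q x' d := by
    intro q hq
    obtain ⟨hq1, hq2⟩ := Finset.mem_filter.1 hq
    refine Finset.mem_filter.2 ⟨hq1, ?_⟩
    rw [planeVal_shift (d := d) q x x']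
    have := mul_pos (hpos q hq1) (sub_pos.2 hxx)
    linarith
  have h2 := Finset.card_le_card hsub
  have h3 : (S.filter fun q => med S m d x < planeVal q x' d).card ≤
      (S.filter fun q => med S m d x' < planeVal q x' d).card := by
    refine Finset.card_le_card fun q hq => ?_
    obtain ⟨hq1, hq2⟩ := Finset.mem_filter.1 hq
    exact Finset.mem_filter.2 ⟨hq1, lt_of_le_of_lt hc hq2⟩
  have h4 := med_above hS (x := x') (d := d)
  rw [above_def] at h4
  omega

lemma med_strictAnti (hS : S.card = 2 * m + 1) (hneg : ∀ q ∈ S, q.1 < 0) :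
    StrictAnti (med S m d) := by
  intro x x' hxx
  by_contra hc
  push_neg at hc
  have h1 := count_le hS (med_above hS (x := x) (d := d))
  have hsub : (S.filter fun q => planeVal q x d ≤ med S m d x) ⊆
      S.filter fun q => planeVal q x' d < med S m d x := by
    intro q hq
    obtain ⟨hq1, hq2⟩ := Finset.mem_filter.1 hq
    refine Finset.mem_filter.2 ⟨hq1, ?_⟩
    rw [planeVal_shift (d := d) q x x']
    have := mul_neg_of_neg_of_pos (hneg q hq1) (sub_pos.2 hxx)
    linarith
  have h2 := Finset.card_le_card hsub
  have h3 : (S.filter fun q => planeVal q x' d < med S m d x).card ≤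
      (S.filter fun q => planeVal q x' d < med S m d x').card := by
    refine Finset.card_le_card fun q hq => ?_
    obtain ⟨hq1, hq2⟩ := Finset.mem_filter.1 hq
    exact Finset.mem_filter.2 ⟨hq1, lt_of_lt_of_le hq2 hc⟩
  have h4 := med_below hS (x := x') (d := d)
  rw [below_def] at h4
  omega

lemma med_le_sup (hS : S.card = 2 * m + 1) :
    med S m d x ≤ S.sup' (hne hS) (fun q => planeVal q x d) := by
  refine csSup_le (A_nonempty hS) fun z hz => ?_
  by_contra hc
  push_neg at hc
  have : (S.filter fun q => planeVal q x d < z) = S := by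
    rw [Finset.filter_eq_self]
    intro q hq
    exact lt_of_le_of_lt (Finset.le_sup' (fun q => planeVal q x d) hq) hc
  have hz' : belowCnt S (x, d, z) ≤ m := hz
  rw [below_def, this, hS] at hz'
  omega

lemma inf_le_med (hS : S.card = 2 * m + 1) :
    S.inf' (hne hS) (fun q => planeVal q x d) ≤ med S m d x :=
  le_csSup (A_bddAbove hS) (inf_mem_A hS)

end S16

open S16 Filter Set in
/-- If `R` consists of an odd number of planes with positive `x`-slope and `B` of an odd
number of planes with negative `x`-slope, then the intersection `L` of the two median levels
is a connected `y`-monotone curve: every plane `y = d` meets `L` in exactly one point. -/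
theorem stmt16 (R B : Finset (ℝ × ℝ × ℝ)) (mR mB : ℕ)
    (hR : R.card = 2 * mR + 1) (hB : B.card = 2 * mB + 1)
    (hRs : ∀ q ∈ R, 0 < q.1) (hBs : ∀ q ∈ B, q.1 < 0) :
    ∀ d : ℝ, ∃! p : ℝ × ℝ × ℝ, p ∈ medLevel R mR ∩ medLevel B mB ∧ p.2.1 = d := by
  intro d
  set fR := med R mR d with hfR
  set fB := med B mB d with hfB
  -- pairwise eventual comparison at +∞ and -∞
  have hpair : ∀ q ∈ R, ∀ r ∈ B,
      (∀ᶠ x in atTop, planeVal r x d < planeVal q x d) ∧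
      (∀ᶠ x in atBot, planeVal q x d < planeVal r x d) := by
    intro q hq r hr
    have hdiff : ∀ x : ℝ, planeVal q x d - planeVal r x d
        = (q.1 - r.1) * x + (q.2.1 * d + q.2.2 - (r.2.1 * d + r.2.2)) := by
      intro x; simp only [planeVal]; ring
    have hslope : 0 < q.1 - r.1 := by have := hRs q hq; have := hBs r hr; linarith
    have ht : Tendsto (fun x : ℝ => planeVal q x d - planeVal r x d) atTop atTop := by
      simp only [hdiff]
      exact (tendsto_id.const_mul_atTop hslope).atTop_add tendsto_const_nhds
    have ht' : Tendsto (fun x : ℝ => planeVal q x d - planeVal r x d) atBot atBot := by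
      simp only [hdiff]
      exact Tendsto.atBot_add ((tendsto_const_mul_atBot_of_pos hslope).2 tendsto_id) tendsto_const_nhds
    constructor
    · exact (ht.eventually_gt_atTop 0).mono fun x hx => by linarith [sub_pos.1 hx]
    · exact (ht'.eventually_lt_atBot 0).mono fun x hx => by linarith [sub_neg.1 hx]
  have hhi : ∃ x1 : ℝ, fB x1 ≤ fR x1 := by
    have hev : ∀ᶠ x in atTop, ∀ q ∈ R, ∀ r ∈ B, planeVal r x d < planeVal q x d := by
      rw [eventually_all_finset]
      intro q hq
      rw [eventually_all_finset]
      intro r hr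
      exact (hpair q hq r hr).1
    obtain ⟨x1, hx1⟩ := hev.exists
    refine ⟨x1, ?_⟩
    calc fB x1 ≤ B.sup' (hne hB) (fun r => planeVal r x1 d) := med_le_sup hB
      _ ≤ R.inf' (hne hR) (fun q => planeVal q x1 d) := by
          refine Finset.sup'_le _ _ fun r hr => Finset.le_inf' _ _ fun q hq => ?_
          exact (hx1 q hq r hr).le
      _ ≤ fR x1 := inf_le_med hR
  have hlo : ∃ x0 : ℝ, fR x0 ≤ fB x0 := by
    have hev : ∀ᶠ x in atBot, ∀ q ∈ R, ∀ r ∈ B, planeVal q x d < planeVal r x d := by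
      rw [eventually_all_finset]
      intro q hq
      rw [eventually_all_finset]
      intro r hr
      exact (hpair q hq r hr).2
    obtain ⟨x0, hx0⟩ := hev.exists
    refine ⟨x0, ?_⟩
    calc fR x0 ≤ R.sup' (hne hR) (fun q => planeVal q x0 d) := med_le_sup hR
      _ ≤ B.inf' (hne hB) (fun r => planeVal r x0 d) := by
          refine Finset.sup'_le _ _ fun q hq => Finset.le_inf' _ _ fun r hr => ?_
          exact (hx0 q hq r hr).le
      _ ≤ fB x0 := inf_le_med hB
  obtain ⟨x1, hx1⟩ := hhi
  obtain ⟨x0, hx0⟩ := hlo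
  -- IVT
  have hg : Continuous fun x => fR x - fB x :=
    (med_continuous hR).sub (med_continuous hB)
  have h0 : (0 : ℝ) ∈ Set.uIcc (fR x0 - fB x0) (fR x1 - fB x1) :=
    Set.mem_uIcc.2 (Or.inl ⟨by linarith, by linarith⟩)
  obtain ⟨x, -, hx⟩ := intermediate_value_uIcc (hg.continuousOn) h0
  have hxeq : fR x = fB x := by
    have : fR x - fB x = 0 := hx
    linarith
  refine ⟨(x, d, fR x), ⟨⟨⟨med_below hR, med_above hR⟩, ?_⟩, rfl⟩, ?_⟩
  · rw [medLevel, Set.mem_setOf_eq]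
    constructor
    · rw [show fR x = fB x from hxeq]; exact med_below hB
    · rw [show fR x = fB x from hxeq]; exact med_above hB
  · rintro ⟨x', d', z'⟩ ⟨⟨⟨hbR, haR⟩, hbB, haB⟩, hd'⟩
    simp only at hd'
    subst hd'
    have hzR : z' = fR x' := eq_med hR hbR haR
    have hzB : z' = fB x' := eq_med hB hbB haB
    have hx'x : x' = x := by
      rcases lt_trichotomy x' x with h | h | h
      · exfalso
        have h1 : fR x' < fR x := med_strictMono hR hRs h
        have h2 : fB x < fB x' := med_strictAnti hB hBs h
        rw [← hzR] at h1
        rw [← hzB] at h2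
        rw [← hxeq] at h2
        linarith
      · exact h
      · exfalso
        have h1 : fR x < fR x' := med_strictMono hR hRs h
        have h2 : fB x' < fB x := med_strictAnti hB hBs h
        rw [← hzR] at h1
        rw [← hzB] at h2
        rw [← hxeq] at h2
        linarith
    subst hx'x
    rw [hzR]
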